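/- arXiv:1103.3069 — 6 statements merged into one kernel-verified Lean document; each statement's English description precedes it below -/
import Mathlib

section
/- Let L be a free abelian group of finite rank, J a divisible abelian group, δ : L → J a group homomorphism, and n a positive integer. Let F_n := {(j, l) ∈ J × L : n·j = δ(l)} be the fiber product of the multiplication-by-n map J → J with δ. Then the sequence 0 → J[n] → F_n ⊗_ℤ ℤ/nℤ → L ⊗_ℤ ℤ/nℤ → 0 is exact, where the first map sends x ∈ J[n] to (x, 0) ⊗ 1 and the second map is induced by the projection (j, l) ↦ l. -/
open TensorProduct

set_option maxHeartbeats 1600000 in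
/-- Let `L` be a free abelian group of finite rank, `J` a divisible
abelian group, `δ : L → J` a homomorphism and `n ≥ 1`.  Let `F` be the fiber product
`{(j, l) ∈ J × L | n•j = δ(l)}` of multiplication-by-`n` on `J` with `δ`.  Then
`0 → J[n] → F ⊗ ℤ/nℤ → L ⊗ ℤ/nℤ → 0` is exact, where the first map sends `x` to
`(x, 0) ⊗ 1` and the second is induced by the projection `(j, l) ↦ l`. -/
theorem one_motive_torsion_sequence_exact
    (L J : Type) [AddCommGroup L] [AddCommGroup J]
    [Module.Free ℤ L] [Module.Finite ℤ L] [DivisibleBy J ℤ]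
    (δ : L →ₗ[ℤ] J) (n : ℕ) (hn : 0 < n)
    (F : Submodule ℤ (J × L))
    (hF : ∀ x : J × L, x ∈ F ↔ (n : ℤ) • x.1 = δ x.2)
    (i : Submodule.torsionBy ℤ J (n : ℤ) →ₗ[ℤ] F ⊗[ℤ] ZMod n)
    (hi : ∀ x : Submodule.torsionBy ℤ J (n : ℤ),
      i x = (⟨((x : J), 0),
        (hF _).mpr (by simp only [map_zero]; exact ((Submodule.mem_torsionBy_iff (n : ℤ) (x : J)).mp x.2))⟩ :
          F) ⊗ₜ[ℤ] (1 : ZMod n))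
    (q : F ⊗[ℤ] ZMod n →ₗ[ℤ] L ⊗[ℤ] ZMod n)
    (hq : q = TensorProduct.map ((LinearMap.snd ℤ J L).comp F.subtype) LinearMap.id) :
    Function.Injective i ∧ Function.Exact i q ∧ Function.Surjective q := by
  classical
  set π : F →ₗ[ℤ] L := (LinearMap.snd ℤ J L).comp F.subtype with hπ
  have hnz : (n : ℤ) ≠ 0 := by exact_mod_cast hn.ne'
  have hπsurj : Function.Surjective π := by
    intro l
    exact ⟨⟨(DivisibleBy.div (δ l) (n : ℤ), l),
      (hF _).mpr (DivisibleBy.div_cancel (δ l) hnz)⟩, rfl⟩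
  obtain ⟨s, hs⟩ := Module.projective_lifting_property π LinearMap.id hπsurj
  have hπs : ∀ l, π (s l) = l := fun l => congrFun (congrArg DFunLike.coe hs) l
  -- φ₀ : F → J, f ↦ f.1 - (s (π f)).1
  set fst : F →ₗ[ℤ] J := (LinearMap.fst ℤ J L).comp F.subtype with hfst
  set φ₀ : F →ₗ[ℤ] J := fst - fst.comp (s.comp π) with hφ₀def
  have hmemF : ∀ f : F, (n : ℤ) • (f : J × L).1 = δ (π f) := fun f => (hF _).mp f.2
  have hφ₀ : ∀ f : F, (n : ℤ) • φ₀ f = 0 := by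
    intro f
    have h1 := hmemF f
    have h2 := hmemF (s (π f))
    rw [hπs] at h2
    simp only [hφ₀def, LinearMap.sub_apply, LinearMap.comp_apply, smul_sub, hfst,
      LinearMap.comp_apply, LinearMap.fst_apply, Submodule.coe_subtype] at *
    rw [h1, h2, sub_self]
  set φ : F →ₗ[ℤ] Submodule.torsionBy ℤ J (n : ℤ) :=
    LinearMap.codRestrict _ φ₀ (fun f => (Submodule.mem_torsionBy_iff _ _).mpr (hφ₀ f)) with hφdef
  have hφval : ∀ f : F, (φ f : J) = (f : J × L).1 - ((s (π f) : J × L)).1 := by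
    intro f; simp [hφdef, hφ₀def, hfst]
  -- ZMod n module structure on the torsion submodule
  letI : Module (ZMod n) (Submodule.torsionBy ℤ J (n : ℤ)) :=
    AddCommGroup.zmodModule (by
      intro x
      have h : (n : ℤ) • (x : J) = 0 := (Submodule.mem_torsionBy_iff (n : ℤ) (x : J)).mp x.2
      apply Subtype.ext
      rw [show ((n • x : Submodule.torsionBy ℤ J (n : ℤ)) : J) = n • (x : J) from rfl,
        ← natCast_zsmul]
      exact h)
  -- bilinear map b : F × ZMod n → torsion, (f, c) ↦ c • φ f
  set b : F →ₗ[ℤ] ZMod n →ₗ[ℤ] Submodule.torsionBy ℤ J (n : ℤ) :=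
    { toFun := fun f =>
        { toFun := fun c => c • φ f
          map_add' := fun c d => add_smul c d _
          map_smul' := fun m c => by
            simp only [RingHom.id_apply, zsmul_eq_mul, mul_smul]
            rw [Int.cast_smul_eq_zsmul] }
      map_add' := fun f g => by ext c; simp
      map_smul' := fun m f => by
        ext c
        simp only [RingHom.id_apply, LinearMap.coe_mk, AddHom.coe_mk, LinearMap.smul_apply,
          map_smul]
        rw [smul_comm] } with hbdef
  set r : F ⊗[ℤ] ZMod n →ₗ[ℤ] Submodule.torsionBy ℤ J (n : ℤ) := TensorProduct.lift b with hrdef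
  have hr : ∀ (f : F) (c : ZMod n), r (f ⊗ₜ c) = c • φ f := fun f c => TensorProduct.lift.tmul f c
  -- elements (x, 0) of F for x torsion
  set e : Submodule.torsionBy ℤ J (n : ℤ) → F := fun x =>
    ⟨((x : J), 0), (hF _).mpr (by
      simp only [map_zero]
      exact (Submodule.mem_torsionBy_iff (n : ℤ) (x : J)).mp x.2)⟩ with hedef
  have hφe : ∀ x, φ (e x) = x := by
    intro x
    ext
    have hπe : π (e x) = 0 := rfl
    rw [hφval, hπe, map_zero]
    simp [hedef]
  -- r ∘ i = id
  have hri : ∀ x, r (i x) = x := by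
    intro x
    rw [hi x, hr, hφe x, one_smul]
  have hinj : Function.Injective i := by
    intro x y hxy
    have := congrArg r hxy
    rwa [hri, hri] at this
  have hq' : ∀ (f : F) (c : ZMod n), q (f ⊗ₜ c) = π f ⊗ₜ c := by
    intro f c; subst hq; exact TensorProduct.map_tmul _ _ _ _
  -- q (i x) = 0
  have hqi : ∀ x, q (i x) = 0 := by
    intro x
    rw [hi x, hq']
    have : π (e x) = 0 := rfl
    exact (congrArg (fun y : L => y ⊗ₜ[ℤ] (1 : ZMod n)) this).trans (zero_tmul _ _)
  -- key identity: t = i (r t) + (s ⊗ id) (q t)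
  set j : L ⊗[ℤ] ZMod n →ₗ[ℤ] F ⊗[ℤ] ZMod n := TensorProduct.map s LinearMap.id with hjdef
  have hj' : ∀ (l : L) (c : ZMod n), j (l ⊗ₜ c) = s l ⊗ₜ c := fun l c =>
    TensorProduct.map_tmul _ _ _ _
  have hkey : ∀ t, i (r t) + j (q t) = t := by
    intro t
    have : (i ∘ₗ r + j ∘ₗ q) = LinearMap.id := by
      apply TensorProduct.ext'
      intro f c
      change i (r (f ⊗ₜ c)) + j (q (f ⊗ₜ c)) = f ⊗ₜ c
      obtain ⟨m, rfl⟩ := ZMod.intCast_surjective c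
      simp only [LinearMap.add_apply, LinearMap.comp_apply, hq',
        LinearMap.id_coe, id_eq]
      rw [hr, Int.cast_smul_eq_zsmul, map_smul, hi, hj']
      rw [← TensorProduct.tmul_smul,
        show m • (1 : ZMod n) = ((m : ℤ) : ZMod n) by rw [zsmul_eq_mul, mul_one],
        ← TensorProduct.add_tmul]
      congr 1
      · apply Subtype.ext
        apply Prod.ext
        · show (φ f : J) + ((s (π f) : J × L)).1 = (f : J × L).1
          rw [hφval]; abel
        · show (0 : L) + ((s (π f) : J × L)).2 = (f : J × L).2
          rw [zero_add]
          exact hπs (π f)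
    exact congrFun (congrArg DFunLike.coe this) t
  refine ⟨hinj, ?_, ?_⟩
  · intro t
    constructor
    · intro ht
      refine ⟨r t, ?_⟩
      have := hkey t
      rwa [ht, map_zero, add_zero] at this
    · rintro ⟨x, rfl⟩
      exact hqi x
  · intro u
    refine ⟨j u, ?_⟩
    have h2 : q ∘ₗ j = LinearMap.id := TensorProduct.ext' fun l c => by
      change q (j (l ⊗ₜ c)) = l ⊗ₜ c
      rw [hj', hq', hπs]
    exact congrFun (congrArg DFunLike.coe h2) u
end

section
/- Let p be a prime, G a finite p-group, and T a module over the group ring ℤ_p[G] which is free of finite rank as a ℤ_p-module. If the 𝔽_p[G]-module T/pT is free, then T is a free ℤ_p[G]-module, of rank equal to the rank of T/pT over 𝔽_p[G]. -/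
open PadicInt IsLocalRing

/-- Multiplication by `n` as an `R`-linear endomorphism. -/
def natMulLinear (R : Type) [Ring R] (T : Type) [AddCommGroup T] [Module R T]
    (n : ℕ) : T →ₗ[R] T where
  toFun x := n • x
  map_add' x y := smul_add n x y
  map_smul' r x := smul_comm n r x

/-- The reduction `T/pT` of a `ℤ_p[G]`-module `T`. -/
abbrev ModPQuot (p : ℕ) [Fact p.Prime] (G : Type) [Group G]
    (T : Type) [AddCommGroup T] [Module (MonoidAlgebra ℤ_[p] G) T] :=
  T ⧸ LinearMap.range (natMulLinear (MonoidAlgebra ℤ_[p] G) T p)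

lemma padic_zero_of_forall_pow_dvd (p : ℕ) [Fact p.Prime] (x : ℤ_[p])
    (h : ∀ k : ℕ, (p : ℤ_[p]) ^ k ∣ x) : x = 0 := by
  refine IsHausdorff.haus (inferInstance : IsHausdorff (maximalIdeal ℤ_[p]) ℤ_[p]) x fun k => ?_
  rw [SModEq.zero, smul_eq_mul, Ideal.mul_top, maximalIdeal_eq_span_p,
    Ideal.span_singleton_pow, Ideal.mem_span_singleton]
  exact h k

open Classical in
/-- A "division by `p`" function on `ℤ_[p]` sending `0` to `0`. -/
noncomputable def pdiv (p : ℕ) [Fact p.Prime] (x : ℤ_[p]) : ℤ_[p] :=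
  if h : ∃ y, x = (p : ℤ_[p]) * y ∧ (x = 0 → y = 0) then h.choose else 0

lemma pdiv_zero (p : ℕ) [Fact p.Prime] : pdiv p 0 = 0 := by
  rw [pdiv]
  split
  · rename_i h
    exact h.choose_spec.2 rfl
  · rfl

lemma pdiv_spec (p : ℕ) [Fact p.Prime] (x : ℤ_[p]) (hx : (p : ℤ_[p]) ∣ x) :
    x = (p : ℤ_[p]) * pdiv p x := by
  have hex : ∃ y, x = (p : ℤ_[p]) * y ∧ (x = 0 → y = 0) := by
    rcases eq_or_ne x 0 with rfl | hx0
    · exact ⟨0, by simp⟩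
    · obtain ⟨y, hy⟩ := hx
      exact ⟨y, hy, fun h => absurd h hx0⟩
  rw [pdiv, dif_pos hex]
  exact hex.choose_spec.1

/-- The reduction map `ℤ_p[G] → 𝔽_p[G]` (as a bare function). -/
noncomputable def redMap (p : ℕ) [Fact p.Prime] (G : Type) :
    MonoidAlgebra ℤ_[p] G → MonoidAlgebra (ZMod p) G :=
  fun a => MonoidAlgebra.ofCoeff (Finsupp.mapRange (PadicInt.toZMod) (map_zero _) a.coeff)

lemma redMap_zero (p : ℕ) [Fact p.Prime] (G : Type) : redMap p G 0 = 0 :=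
  congrArg MonoidAlgebra.ofCoeff Finsupp.mapRange_zero

lemma redMap_add (p : ℕ) [Fact p.Prime] (G : Type) (a b : MonoidAlgebra ℤ_[p] G) :
    redMap p G (a + b) = redMap p G a + redMap p G b :=
  congrArg MonoidAlgebra.ofCoeff (Finsupp.mapRange_add (map_add _) a.coeff b.coeff)

lemma redMap_single (p : ℕ) [Fact p.Prime] (G : Type) (g : G) (c : ℤ_[p]) :
    redMap p G (MonoidAlgebra.single g c) = MonoidAlgebra.single g (PadicInt.toZMod c) :=
  congrArg MonoidAlgebra.ofCoeff Finsupp.mapRange_single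

lemma redMap_apply (p : ℕ) [Fact p.Prime] (G : Type) (a : MonoidAlgebra ℤ_[p] G) (g : G) :
    (redMap p G a).coeff g = PadicInt.toZMod (a.coeff g) :=
  Finsupp.mapRange_apply (hf := map_zero _)

/-- Induction principle for `MonoidAlgebra`, stated at the `MonoidAlgebra` type. -/
lemma MonoidAlgebra.my_induction {k G : Type} [Semiring k]
    {p : MonoidAlgebra k G → Prop} (f : MonoidAlgebra k G) (h0 : p 0)
    (ha : ∀ (g : G) (c : k) (f : MonoidAlgebra k G),
      p f → p (MonoidAlgebra.single g c + f)) : p f := by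
  refine Finsupp.induction (motive := fun x => p (MonoidAlgebra.ofCoeff x)) f.coeff h0 ?_
  intro a b f' _ _ hf'
  exact ha a b (MonoidAlgebra.ofCoeff f') hf'

set_option maxHeartbeats 1000000 in
/-- Let `G` be a finite `p`-group and `T` a `ℤ_p[G]`-module which is
free of finite rank over `ℤ_p`.  If the `𝔽_p[G]`-module `T/pT` is free (of rank `n`),
then `T` is a free `ℤ_p[G]`-module of the same rank `n`. -/
theorem free_over_padic_group_ring_of_free_mod_p
    (p : ℕ) [Fact p.Prime] (G : Type) [Group G] [Finite G] (hG : IsPGroup p G)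
    (T : Type) [AddCommGroup T] [Module (MonoidAlgebra ℤ_[p] G) T]
    [Module ℤ_[p] T] [IsScalarTower ℤ_[p] (MonoidAlgebra ℤ_[p] G) T]
    [Module.Free ℤ_[p] T] [Module.Finite ℤ_[p] T]
    [Module (MonoidAlgebra (ZMod p) G) (ModPQuot p G T)]
    (hcompat : ∀ (c : ℤ_[p]) (g : G) (x : ModPQuot p G T),
      (MonoidAlgebra.single g (PadicInt.toZMod c) : MonoidAlgebra (ZMod p) G) • x =
      (MonoidAlgebra.single g c : MonoidAlgebra ℤ_[p] G) • x)
    (n : ℕ)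
    (hfree : Nonempty (Module.Basis (Fin n) (MonoidAlgebra (ZMod p) G) (ModPQuot p G T))) :
    Nonempty (Module.Basis (Fin n) (MonoidAlgebra ℤ_[p] G) T) := by
  classical
  obtain ⟨b⟩ := hfree
  set R := MonoidAlgebra ℤ_[p] G with hR
  set S := MonoidAlgebra (ZMod p) G with hS
  set P : Submodule R T := LinearMap.range (natMulLinear R T p) with hP
  have hp0 : (p : ℤ_[p]) ≠ 0 := Nat.cast_ne_zero.mpr (Fact.out : p.Prime).ne_zero
  -- lift the basis vectors
  have hsurj : ∀ i, ∃ x : T, Submodule.Quotient.mk x = b i := fun i =>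
    Submodule.Quotient.mk_surjective P (b i)
  choose t ht using hsurj
  have htm : ∀ i, P.mkQ (t i) = b i := fun i => ht i
  -- compatibility of the two actions
  have hφ : ∀ (a : R) (x : ModPQuot p G T), (redMap p G a) • x = a • x := by
    intro a
    refine MonoidAlgebra.my_induction
      (p := fun a : R => ∀ x : ModPQuot p G T, (redMap p G a) • x = a • x) a ?_ ?_
    · intro x
      rw [redMap_zero, zero_smul, zero_smul]
    · intro g c a ih x
      have e1 : redMap p G (MonoidAlgebra.single g c + a)
          = MonoidAlgebra.single g (PadicInt.toZMod c) + redMap p G a := by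
        rw [redMap_add, redMap_single]
      rw [e1, add_smul, hcompat c g x, ih x]
      exact (add_smul _ _ _).symm
  set N : Submodule R T := Submodule.span R (Set.range t) with hN
  have hmapN : Submodule.map P.mkQ N = ⊤ := by
    rw [hN, Submodule.map_span]
    have hcomp : (⇑(P.mkQ) ∘ t) = ⇑b := funext fun i => htm i
    rw [← Set.range_comp, hcomp]
    -- span R (range b) = ⊤ since span S (range b) = ⊤
    have hsmul : ∀ (a : S) (x : ModPQuot p G T),
        x ∈ Submodule.span R (Set.range b) → a • x ∈ Submodule.span R (Set.range b) := by
      intro a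
      refine MonoidAlgebra.my_induction
        (p := fun a : S => ∀ x : ModPQuot p G T,
          x ∈ Submodule.span R (Set.range b) → a • x ∈ Submodule.span R (Set.range b)) a ?_ ?_
      · intro x hx
        rw [zero_smul]
        exact Submodule.zero_mem _
      · intro g c a ih x hx
        rw [add_smul]
        refine Submodule.add_mem _ ?_ (ih x hx)
        have hc' : PadicInt.toZMod ((c.val : ℕ) : ℤ_[p]) = c := by
          rw [map_natCast]
          exact ZMod.natCast_rightInverse c
        rw [← hc', hcompat]
        exact Submodule.smul_mem _ _ hx
    rw [eq_top_iff]
    intro x _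
    have hx : x ∈ Submodule.span S (Set.range b) := by rw [b.span_eq]; trivial
    exact Submodule.span_induction (fun y hy => Submodule.subset_span hy)
      (Submodule.zero_mem _) (fun y z _ _ hy hz => Submodule.add_mem _ hy hz)
      (fun a y _ hy => hsmul a y hy) hx
  -- every element of T is in N up to p • T
  have hdecomp : ∀ x : T, ∃ y ∈ N, ∃ z : T, x = y + (p : ℤ_[p]) • z := by
    intro x
    have hx : P.mkQ x ∈ Submodule.map P.mkQ N := by rw [hmapN]; trivial
    obtain ⟨y, hy, hxy⟩ := hx
    have hxy' : (Submodule.Quotient.mk x : T ⧸ P) = Submodule.Quotient.mk y := by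
      rw [← Submodule.mkQ_apply, ← Submodule.mkQ_apply, hxy]
    have hmem : x - y ∈ P := (Submodule.Quotient.eq P).mp hxy'
    obtain ⟨z, hz⟩ := hmem
    refine ⟨y, hy, z, ?_⟩
    have hz' : (p : ℕ) • z = x - y := hz
    have hz'' : ((p : ℕ) : ℤ_[p]) • z = x - y := by rw [Nat.cast_smul_eq_nsmul]; exact hz'
    rw [hz'']
    abel
  -- Nakayama: N = ⊤
  have hNtop : N = ⊤ := by
    set N₀ : Submodule ℤ_[p] T := N.restrictScalars ℤ_[p] with hN₀
    have key : (⊤ : Submodule ℤ_[p] (T ⧸ N₀)) = ⊥ := by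
      refine Submodule.eq_bot_of_le_smul_of_le_jacobson_bot (maximalIdeal ℤ_[p]) ⊤
        Module.Finite.fg_top ?_ (IsLocalRing.jacobson_eq_maximalIdeal ⊥ bot_ne_top).ge
      intro q _
      obtain ⟨x, rfl⟩ := Submodule.Quotient.mk_surjective N₀ q
      obtain ⟨y, hy, z, hxyz⟩ := hdecomp x
      have hq : (Submodule.Quotient.mk x : T ⧸ N₀)
          = (p : ℤ_[p]) • (Submodule.Quotient.mk z : T ⧸ N₀) := by
        rw [← Submodule.Quotient.mk_smul, Submodule.Quotient.eq, hxyz]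
        simpa [hN₀] using hy
      rw [hq]
      refine Submodule.smul_mem_smul ?_ trivial
      rw [maximalIdeal_eq_span_p]
      exact Ideal.mem_span_singleton_self _
    rw [eq_top_iff]
    intro x _
    have hx : (Submodule.Quotient.mk x : T ⧸ N₀) ∈ (⊥ : Submodule ℤ_[p] (T ⧸ N₀)) := by
      rw [← key]; trivial
    rw [Submodule.mem_bot, Submodule.Quotient.mk_eq_zero] at hx
    exact hx
  -- the linear map (Fin n → R) → T
  let f : (Fin n → R) →ₗ[R] T :=
    { toFun := fun c => ∑ i, c i • t i
      map_add' := fun c d => by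
        simp only [Pi.add_apply, add_smul, Finset.sum_add_distrib]
      map_smul' := fun r c => by
        simp only [Pi.smul_apply, smul_eq_mul, mul_smul, RingHom.id_apply, Finset.smul_sum] }
  -- surjectivity
  have hfsurj : Function.Surjective f := by
    intro x
    have hx : x ∈ N := hNtop ▸ Submodule.mem_top
    rw [hN] at hx
    obtain ⟨c, hc⟩ := (Submodule.mem_span_range_iff_exists_fun R).mp hx
    exact ⟨c, hc⟩
  -- the key divisibility step for injectivity
  have hstep : ∀ c : Fin n → R, f c = 0 →
      ∃ c' : Fin n → R, c = (p : ℤ_[p]) • c' ∧ f c' = 0 := by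
    intro c hc
    have hc0 : ∑ i, c i • t i = 0 := hc
    -- reduce mod p
    have h0 : ∑ i, (redMap p G (c i)) • b i = 0 := by
      have h1 := congrArg P.mkQ hc0
      rw [map_zero, map_sum] at h1
      have h2 : ∀ i ∈ Finset.univ, P.mkQ (c i • t i) = (redMap p G (c i)) • b i := by
        intro i _
        rw [LinearMap.map_smul, htm i, hφ]
      rw [Finset.sum_congr rfl h2] at h1
      exact h1
    have hzero : ∀ i, redMap p G (c i) = 0 :=
      Fintype.linearIndependent_iff.mp b.linearIndependent (fun i => redMap p G (c i)) h0
    -- each coefficient is divisible by p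
    have hdvd : ∀ i (g : G), (p : ℤ_[p]) ∣ (c i).coeff g := by
      intro i g
      have h1 : PadicInt.toZMod ((c i).coeff g) = 0 := by
        have h2 : (redMap p G (c i)).coeff g = (0 : S).coeff g := by rw [hzero i]
        rw [redMap_apply] at h2
        simpa using h2
      have hker : (c i).coeff g ∈ RingHom.ker (PadicInt.toZMod : ℤ_[p] →+* ZMod p) := h1
      rw [PadicInt.ker_toZMod, maximalIdeal_eq_span_p, Ideal.mem_span_singleton] at hker
      exact hker
    set c' : Fin n → R := fun i => MonoidAlgebra.ofCoeff (Finsupp.mapRange (pdiv p) (pdiv_zero p) (c i).coeff) with hc'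
    have hcc' : c = (p : ℤ_[p]) • c' := by
      funext i
      refine MonoidAlgebra.coeff_injective (Finsupp.ext fun g => ?_)
      show (c i).coeff g = ((p : ℤ_[p]) • c' i).coeff g
      rw [MonoidAlgebra.coeff_smul_apply, smul_eq_mul]
      have : (c' i).coeff g = pdiv p ((c i).coeff g) := Finsupp.mapRange_apply (hf := pdiv_zero p)
      rw [this]
      exact pdiv_spec p _ (hdvd i g)
    have hpf : (p : ℤ_[p]) • f c' = 0 := by
      have h2 : f ((p : ℤ_[p]) • c') = (p : ℤ_[p]) • f c' := by
        show ∑ i, ((p : ℤ_[p]) • c' i) • t i = (p : ℤ_[p]) • ∑ i, c' i • t i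
        rw [Finset.smul_sum]
        exact Finset.sum_congr rfl fun i _ => smul_assoc _ _ _
      rw [← h2, ← hcc', hc]
    exact ⟨c', hcc', (smul_eq_zero.mp hpf).resolve_left hp0⟩
  -- injectivity
  have hfinj : Function.Injective f := by
    rw [← LinearMap.ker_eq_bot (M := Fin n → R), Submodule.eq_bot_iff]
    intro c hc
    rw [LinearMap.mem_ker] at hc
    have hiter : ∀ k : ℕ, ∃ c' : Fin n → R, c = ((p : ℤ_[p]) ^ k) • c' ∧ f c' = 0 := by
      intro k
      induction k with
      | zero => exact ⟨c, by simp, hc⟩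
      | succ k ih =>
          obtain ⟨c', hcc', hfc'⟩ := ih
          obtain ⟨c'', hcc'', hfc''⟩ := hstep c' hfc'
          refine ⟨c'', ?_, hfc''⟩
          rw [hcc', hcc'', smul_smul, pow_succ]
    funext i
    refine MonoidAlgebra.coeff_injective (Finsupp.ext fun g => ?_)
    show (c i).coeff g = (0 : R).coeff g
    rw [MonoidAlgebra.coeff_zero, Finsupp.zero_apply]
    refine padic_zero_of_forall_pow_dvd p _ fun k => ?_
    obtain ⟨c', hcc', -⟩ := hiter k
    refine ⟨(c' i).coeff g, ?_⟩
    have h3 : (c i) = (p : ℤ_[p]) ^ k • c' i := by rw [hcc']; rfl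
    rw [h3, MonoidAlgebra.coeff_smul_apply, smul_eq_mul]
  exact ⟨(Pi.basisFun R (Fin n)).map (LinearEquiv.ofBijective f ⟨hfinj, hfsurj⟩)⟩
end

section
/- Let p be a prime, G a finite abelian group, and M a ℤ_p[G]-module which is free of finite rank as a ℤ_p-module, equipped with a ℤ_p[G]-linear automorphism γ such that M_Γ := M/(γ − 1)M is finite. Let M* := Hom_{ℤ_p}(M, ℤ_p), endowed with the contravariant actions (g·f)(x) := f(g^{-1}x) for g ∈ G and (γ·f)(x) := f(γ^{-1}x), and let (M*)_Γ := M*/(γ − 1)M*. Then there is an isomorphism of ℤ_p[G]-modules Hom_{ℤ_p}(M_Γ, ℚ_p/ℤ_p) ≅ (M*)_Γ, where the Pontrjagin dual Hom_{ℤ_p}(M_Γ, ℚ_p/ℤ_p) carries the contravariant G-action (g·f)(x) := f(g^{-1}x). -/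
/-- The Prüfer group `ℚ_p/ℤ_p`, realized as the quotient of `ℚ_p` by `ℤ_p`. -/
noncomputable abbrev PruferModule (p : ℕ) [Fact p.Prime] :=
  ℚ_[p] ⧸ LinearMap.range (Algebra.linearMap ℤ_[p] ℚ_[p])

section

variable (p : ℕ) [Fact p.Prime] (G : Type) [CommGroup G] [Finite G]
  (M : Type) [AddCommGroup M] [Module ℤ_[p] M]
  [Module (MonoidAlgebra ℤ_[p] G) M] [IsScalarTower ℤ_[p] (MonoidAlgebra ℤ_[p] G) M]

/-- The action of the group element `g ∈ G` on the `ℤ_p[G]`-module `M`, as a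
`ℤ_p`-linear endomorphism. -/
noncomputable def gAct (g : G) : M →ₗ[ℤ_[p]] M :=
  LinearMap.restrictScalars ℤ_[p]
    (LinearMap.lsmul (MonoidAlgebra ℤ_[p] G) M (MonoidAlgebra.single g 1))

variable (γ : M ≃ₗ[MonoidAlgebra ℤ_[p] G] M)

/-- The `Γ`-coinvariants `M_Γ = M/(γ-1)M`. -/
noncomputable abbrev coinvOf :=
  M ⧸ (LinearMap.range (γ.toLinearMap - LinearMap.id)).restrictScalars ℤ_[p]

/-- The action of `g ∈ G` induced on the coinvariants `M_Γ`. -/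
noncomputable def gActQ (g : G) : coinvOf p G M γ →ₗ[ℤ_[p]] coinvOf p G M γ :=
  Submodule.mapQ _ _ (gAct p G M g)
    (fun x hx => by
      obtain ⟨y, rfl⟩ := hx
      refine ⟨(MonoidAlgebra.single g 1 : MonoidAlgebra ℤ_[p] G) • y, ?_⟩
      simp [gAct, LinearMap.sub_apply, smul_sub, map_smul])

/-- The contravariant action `(γ • f)(x) = f(γ⁻¹ • x)` on the `ℤ_p`-dual `M*`. -/
noncomputable def starGamma : (M →ₗ[ℤ_[p]] ℤ_[p]) →ₗ[ℤ_[p]] (M →ₗ[ℤ_[p]] ℤ_[p]) :=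
  LinearMap.lcomp ℤ_[p] ℤ_[p] (LinearMap.restrictScalars ℤ_[p] γ.symm.toLinearMap)

/-- The contravariant action `(g • f)(x) = f(g⁻¹ • x)` of `g ∈ G` on the
`ℤ_p`-dual `M*`. -/
noncomputable def starG (g : G) : (M →ₗ[ℤ_[p]] ℤ_[p]) →ₗ[ℤ_[p]] (M →ₗ[ℤ_[p]] ℤ_[p]) :=
  LinearMap.lcomp ℤ_[p] ℤ_[p] (gAct p G M g⁻¹)

/-- The `Γ`-coinvariants `(M*)_Γ` of the `ℤ_p`-dual `M*` (for the contravariant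
`γ`-action). -/
noncomputable abbrev dualCoinv :=
  (M →ₗ[ℤ_[p]] ℤ_[p]) ⧸ LinearMap.range (starGamma p G M γ - LinearMap.id)

/-- The contravariant action of `g ∈ G` induced on `(M*)_Γ`. -/
noncomputable def starGQ (g : G) : dualCoinv p G M γ →ₗ[ℤ_[p]] dualCoinv p G M γ :=
  Submodule.mapQ _ _ (starG p G M g)
    (fun u hu => by
      obtain ⟨v, rfl⟩ := hu
      refine ⟨starG p G M g v, ?_⟩
      ext x
      simp [starGamma, starG, gAct, LinearMap.sub_apply, map_smul])

end

set_option linter.unusedSectionVars false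

section aux

variable (p : ℕ) [Fact p.Prime] (G : Type) [CommGroup G] [Finite G]
  (M : Type) [AddCommGroup M] [Module ℤ_[p] M]
  [Module (MonoidAlgebra ℤ_[p] G) M] [IsScalarTower ℤ_[p] (MonoidAlgebra ℤ_[p] G) M]
  (γ : M ≃ₗ[MonoidAlgebra ℤ_[p] G] M)

/-- `T = γ - 1` as a `ℤ_p`-linear endomorphism. -/
noncomputable def Tlin : M →ₗ[ℤ_[p]] M :=
  LinearMap.restrictScalars ℤ_[p] (γ.toLinearMap - LinearMap.id)

lemma Tlin_apply (x : M) : Tlin p G M γ x = γ x - x := rfl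

lemma mem_coinv_iff (x : M) :
    x ∈ (LinearMap.range (γ.toLinearMap - LinearMap.id)).restrictScalars ℤ_[p] ↔
      ∃ y, Tlin p G M γ y = x := Iff.rfl

/-- `c • x` lies in the range of `T` for `c = Nat.card` of the coinvariants. -/
lemma exists_c (hfin : Finite (coinvOf p G M γ)) :
    ∃ c : ℤ_[p], c ≠ 0 ∧ ∀ x : M, ∃ y, Tlin p G M γ y = c • x := by
  refine ⟨(Nat.card (coinvOf p G M γ) : ℤ_[p]), ?_, ?_⟩
  · exact_mod_cast Nat.cast_ne_zero.mpr (Nat.card_ne_zero.mpr ⟨⟨0⟩, hfin⟩)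
  · intro x
    have h0 : (Nat.card (coinvOf p G M γ) : ℤ_[p]) • (Submodule.Quotient.mk x : coinvOf p G M γ) = 0 := by
      rw [Nat.cast_smul_eq_nsmul]
      exact card_nsmul_eq_zero'
    rw [← Submodule.Quotient.mk_smul, Submodule.Quotient.mk_eq_zero] at h0
    exact h0


variable [Module.Free ℤ_[p] M] [Module.Finite ℤ_[p] M]

local notation "ιM" => Module.Free.ChooseBasisIndex ℤ_[p] M
local notation "W" => (Module.Free.ChooseBasisIndex ℤ_[p] M → ℚ_[p])

/-- Coordinates of `M` inside `ℚ_p^n`. -/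
noncomputable def jmap : M →ₗ[ℤ_[p]] W where
  toFun x i := ((Module.Free.chooseBasis ℤ_[p] M).repr x i : ℚ_[p])
  map_add' x y := by ext i; simp
  map_smul' c x := by
    ext i
    simp [Algebra.smul_def, PadicInt.algebraMap_apply]

lemma jmap_injective : Function.Injective (jmap p M) := by
  intro x y h
  have : ∀ i, (Module.Free.chooseBasis ℤ_[p] M).repr x i =
      (Module.Free.chooseBasis ℤ_[p] M).repr y i := by
    intro i
    have h2 := congrFun h i
    exact PadicInt.ext (by simpa [jmap, Subtype.coe_inj] using h2)
  have : (Module.Free.chooseBasis ℤ_[p] M).repr x = (Module.Free.chooseBasis ℤ_[p] M).repr y :=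
    Finsupp.ext this
  exact (Module.Free.chooseBasis ℤ_[p] M).repr.injective this

lemma jmap_basis (i : ιM) :
    jmap p M ((Module.Free.chooseBasis ℤ_[p] M) i) = Pi.basisFun ℚ_[p] ιM i := by
  ext k
  simp only [jmap, LinearMap.coe_mk, AddHom.coe_mk, Module.Basis.repr_self, Finsupp.single_apply,
    Pi.basisFun_apply, Pi.single_apply]
  split <;> split <;> simp_all

/-- The `ℚ_p`-linear extension of `T` to `ℚ_p^n`. -/
noncomputable def TK : W →ₗ[ℚ_[p]] W :=
  (Pi.basisFun ℚ_[p] ιM).constr ℚ_[p]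
    (fun i => jmap p M (Tlin p G M γ ((Module.Free.chooseBasis ℤ_[p] M) i)))

lemma TK_jmap (x : M) : TK p G M γ (jmap p M x) = jmap p M (Tlin p G M γ x) := by
  have : ((TK p G M γ).restrictScalars ℤ_[p]).comp (jmap p M)
      = (jmap p M).comp (Tlin p G M γ) := by
    apply (Module.Free.chooseBasis ℤ_[p] M).ext
    intro i
    simp only [LinearMap.coe_comp, Function.comp_apply, LinearMap.coe_restrictScalars]
    rw [jmap_basis]
    exact (Pi.basisFun ℚ_[p] ιM).constr_basis ℚ_[p] _ i
  exact congrFun (congrArg (fun f => f.toFun) this) x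

/-- An extension lemma: every `ℤ_p`-linear map into `ℚ_p` scales into `jmap`'s image. -/
lemma exists_pow_smul_mem_jmap (w : W) :
    ∃ (m : ℕ) (x : M), (p : ℚ_[p]) ^ m • w = jmap p M x := by
  have hp1 : (1:ℝ) < (p:ℝ) := by
    exact_mod_cast (Fact.out : p.Prime).one_lt
  have key : ∀ i, ∃ m : ℕ, ∀ m' ≥ m, ‖(p : ℚ_[p]) ^ m' * w i‖ ≤ 1 := by
    intro i
    obtain ⟨m, hm⟩ := pow_unbounded_of_one_lt ‖w i‖ hp1
    refine ⟨m, fun m' hm' => ?_⟩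
    rw [norm_mul, norm_pow, Padic.norm_p]
    rcases eq_or_ne (w i) 0 with h | h
    · simp [h]
    · rw [inv_pow]
      rw [inv_mul_le_iff₀ (by positivity), mul_one]
      calc ‖w i‖ ≤ (p:ℝ)^m := le_of_lt hm
      _ ≤ (p:ℝ)^m' := pow_le_pow_right₀ (le_of_lt hp1) hm'
  choose ms hms using key
  haveI : Fintype ιM := Module.Free.ChooseBasisIndex.fintype ℤ_[p] M
  obtain ⟨m, hm⟩ : ∃ m : ℕ, ∀ i, ms i ≤ m := Finite.exists_le ms
  have hz : ∀ i, ∃ z : ℤ_[p], (z : ℚ_[p]) = (p : ℚ_[p]) ^ m * w i :=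
    fun i => ⟨⟨_, hms i m (hm i)⟩, rfl⟩
  choose z hzz using hz
  refine ⟨m, ∑ i, z i • (Module.Free.chooseBasis ℤ_[p] M) i, ?_⟩
  ext k
  rw [map_sum]
  simp only [map_smul, jmap_basis, Finset.sum_apply, Pi.smul_apply, Pi.basisFun_apply,
    Pi.single_apply, Algebra.smul_def, PadicInt.algebraMap_apply, smul_eq_mul]
  rw [Finset.sum_eq_single k (fun i _ hik => by simp [hik]) (fun h => absurd (Finset.mem_univ k) h)]
  simp [hzz k]

variable (c : ℤ_[p]) (hc0 : c ≠ 0) (hc : ∀ x : M, ∃ y, Tlin p G M γ y = c • x)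

include hc0 hc in
lemma TK_surjective : Function.Surjective (TK p G M γ) := by
  intro w
  obtain ⟨m, x, hmx⟩ := exists_pow_smul_mem_jmap p M w
  obtain ⟨y, hy⟩ := hc x
  have hcK : (c : ℚ_[p]) ≠ 0 := by
    simpa [PadicInt.coe_ne_zero] using hc0
  have hpK : ((p : ℚ_[p]) ^ m) ≠ 0 := by
    have : (p : ℚ_[p]) ≠ 0 := by exact_mod_cast (Fact.out : p.Prime).ne_zero
    exact pow_ne_zero _ this
  refine ⟨((c : ℚ_[p]) * (p : ℚ_[p]) ^ m)⁻¹ • jmap p M y, ?_⟩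
  rw [map_smul, TK_jmap, hy, map_smul, ← hmx]
  rw [← IsScalarTower.algebraMap_smul ℚ_[p] c ((p : ℚ_[p]) ^ m • w),
    PadicInt.algebraMap_apply, smul_smul, smul_smul, mul_assoc,
    inv_mul_cancel₀ (mul_ne_zero hcK hpK), one_smul]

include hc0 hc in
lemma TK_injective : Function.Injective (TK p G M γ) := by
  haveI : Fintype ιM := Module.Free.ChooseBasisIndex.fintype ℤ_[p] M
  exact LinearMap.injective_iff_surjective.mpr (TK_surjective p G M γ c hc0 hc)

include hc0 hc in
lemma Tlin_injective : Function.Injective (Tlin p G M γ) := by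
  intro x y h
  apply jmap_injective p M
  apply TK_injective p G M γ c hc0 hc
  rw [TK_jmap, TK_jmap, h]

/-- `TK` as a linear equivalence. -/
noncomputable def TKequiv : W ≃ₗ[ℚ_[p]] W :=
  LinearEquiv.ofBijective (TK p G M γ)
    ⟨TK_injective p G M γ c hc0 hc, TK_surjective p G M γ c hc0 hc⟩

/-- The ℚ_p-linear extension of a functional `φ : M →ₗ ℤ_p`. -/
noncomputable def phiK (φ : M →ₗ[ℤ_[p]] ℤ_[p]) : W →ₗ[ℚ_[p]] ℚ_[p] :=
  (Pi.basisFun ℚ_[p] ιM).constr ℚ_[p]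
    (fun i => (φ ((Module.Free.chooseBasis ℤ_[p] M) i) : ℚ_[p]))

lemma phiK_jmap (φ : M →ₗ[ℤ_[p]] ℤ_[p]) (x : M) :
    phiK p M φ (jmap p M x) = (φ x : ℚ_[p]) := by
  have : ((phiK p M φ).restrictScalars ℤ_[p]).comp (jmap p M)
      = (Algebra.linearMap ℤ_[p] ℚ_[p]).comp φ := by
    apply (Module.Free.chooseBasis ℤ_[p] M).ext
    intro i
    simp only [LinearMap.coe_comp, Function.comp_apply, LinearMap.coe_restrictScalars,
      Algebra.linearMap_apply, PadicInt.algebraMap_apply]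
    rw [jmap_basis]
    exact (Pi.basisFun ℚ_[p] ιM).constr_basis ℚ_[p] _ i
  have h2 := congrFun (congrArg (fun f => f.toFun) this) x
  simpa using h2

set_option maxHeartbeats 1000000 in
/-- The canonical `ℤ_p`-linear map `ψ_φ : M → ℚ_p` with `ψ_φ ∘ T = φ`. -/
noncomputable def psiMap (φ : M →ₗ[ℤ_[p]] ℤ_[p]) : M →ₗ[ℤ_[p]] ℚ_[p] :=
  (((phiK p M φ).comp (TKequiv p G M γ c hc0 hc).symm.toLinearMap).restrictScalars
    ℤ_[p]).comp (jmap p M)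

lemma psiMap_T (φ : M →ₗ[ℤ_[p]] ℤ_[p]) (x : M) :
    psiMap p G M γ c hc0 hc φ (Tlin p G M γ x) = (φ x : ℚ_[p]) := by
  simp only [psiMap, LinearMap.coe_comp, Function.comp_apply, LinearMap.coe_restrictScalars,
    LinearEquiv.coe_coe]
  rw [← TK_jmap]
  have : (TKequiv p G M γ c hc0 hc).symm (TK p G M γ (jmap p M x)) = jmap p M x :=
    (TKequiv p G M γ c hc0 hc).symm_apply_apply _
  rw [this, phiK_jmap]

include hc0 hc in
/-- Uniqueness of such `ψ`. -/
lemma psi_unique (ψ₁ ψ₂ : M →ₗ[ℤ_[p]] ℚ_[p])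
    (h : ∀ x, ψ₁ (Tlin p G M γ x) = ψ₂ (Tlin p G M γ x)) : ψ₁ = ψ₂ := by
  ext x
  obtain ⟨y, hy⟩ := hc x
  have h2 := h y
  rw [hy, map_smul, map_smul, Algebra.smul_def, Algebra.smul_def] at h2
  have hcK : (c : ℚ_[p]) ≠ 0 := by simpa [PadicInt.coe_ne_zero] using hc0
  rw [PadicInt.algebraMap_apply] at h2
  exact mul_left_cancel₀ hcK h2

lemma mem_range_algebraMap_iff (q : ℚ_[p]) :
    q ∈ LinearMap.range (Algebra.linearMap ℤ_[p] ℚ_[p]) ↔ ‖q‖ ≤ 1 := by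
  constructor
  · rintro ⟨z, rfl⟩
    simpa [Algebra.linearMap_apply, PadicInt.algebraMap_apply] using z.2
  · intro h
    exact ⟨⟨q, h⟩, rfl⟩

/-- A `ℚ_p`-valued functional with integral values, as a `ℤ_p`-valued functional. -/
noncomputable def toIntDual (F : M →ₗ[ℤ_[p]] ℚ_[p]) (h : ∀ x, ‖F x‖ ≤ 1) :
    M →ₗ[ℤ_[p]] ℤ_[p] where
  toFun x := ⟨F x, h x⟩
  map_add' x y := Subtype.ext (by simp; rfl)
  map_smul' a x := Subtype.ext (by
    simp [Algebra.smul_def, PadicInt.algebraMap_apply, smul_eq_mul, PadicInt.coe_mul]; rfl)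

lemma toIntDual_coe (F : M →ₗ[ℤ_[p]] ℚ_[p]) (h : ∀ x, ‖F x‖ ≤ 1) (x : M) :
    ((toIntDual p M F h x : ℤ_[p]) : ℚ_[p]) = F x := rfl

/-- Projection `ℚ_p → ℚ_p/ℤ_p`. -/
noncomputable def piP : ℚ_[p] →ₗ[ℤ_[p]] PruferModule p :=
  (LinearMap.range (Algebra.linearMap ℤ_[p] ℚ_[p])).mkQ

lemma piP_coe_eq_zero (z : ℤ_[p]) : piP p ((z : ℚ_[p])) = 0 := by
  rw [piP, Submodule.mkQ_apply, Submodule.Quotient.mk_eq_zero]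
  exact ⟨z, by simp [Algebra.linearMap_apply, PadicInt.algebraMap_apply]⟩

include hc0 hc in
lemma psiMap_add (φ₁ φ₂ : M →ₗ[ℤ_[p]] ℤ_[p]) :
    psiMap p G M γ c hc0 hc (φ₁ + φ₂) =
      psiMap p G M γ c hc0 hc φ₁ + psiMap p G M γ c hc0 hc φ₂ := by
  apply psi_unique p G M γ c hc0 hc
  intro x
  simp [psiMap_T, PadicInt.coe_add]

include hc0 hc in
lemma psiMap_smul (a : ℤ_[p]) (φ : M →ₗ[ℤ_[p]] ℤ_[p]) :
    psiMap p G M γ c hc0 hc (a • φ) = a • psiMap p G M γ c hc0 hc φ := by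
  apply psi_unique p G M γ c hc0 hc
  intro x
  simp [psiMap_T, Algebra.smul_def, PadicInt.algebraMap_apply, PadicInt.coe_mul]

/-- The main map `M* → Hom(M_Γ, ℚ_p/ℤ_p)`. -/
noncomputable def alphaMap : (M →ₗ[ℤ_[p]] ℤ_[p]) →ₗ[ℤ_[p]]
    (coinvOf p G M γ →ₗ[ℤ_[p]] PruferModule p) where
  toFun φ := Submodule.liftQ _ ((piP p).comp (psiMap p G M γ c hc0 hc φ))
    (by
      rintro x ⟨y, rfl⟩
      show (piP p) ((psiMap p G M γ c hc0 hc φ) (Tlin p G M γ y)) = 0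
      rw [psiMap_T, piP_coe_eq_zero])
  map_add' φ₁ φ₂ := by
    apply Submodule.linearMap_qext
    ext x
    simp [psiMap_add p G M γ c hc0 hc]
  map_smul' a φ := by
    apply Submodule.linearMap_qext
    ext x
    simp [psiMap_smul p G M γ c hc0 hc]

lemma alphaMap_mk (φ : M →ₗ[ℤ_[p]] ℤ_[p]) (x : M) :
    alphaMap p G M γ c hc0 hc φ (Submodule.Quotient.mk x) =
      piP p (psiMap p G M γ c hc0 hc φ x) :=
  Submodule.liftQ_apply _ _ x

lemma starGamma_apply (v : M →ₗ[ℤ_[p]] ℤ_[p]) (x : M) :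
    starGamma p G M γ v x = v (γ.symm x) := rfl

include hc0 hc in
lemma alphaMap_vanish (v : M →ₗ[ℤ_[p]] ℤ_[p]) :
    alphaMap p G M γ c hc0 hc (starGamma p G M γ v - v) = 0 := by
  have hpsi : psiMap p G M γ c hc0 hc (starGamma p G M γ v - v) =
      -((Algebra.linearMap ℤ_[p] ℚ_[p]).comp
        (v.comp (LinearMap.restrictScalars ℤ_[p] γ.symm.toLinearMap))) := by
    apply psi_unique p G M γ c hc0 hc
    intro x
    rw [psiMap_T]
    simp only [LinearMap.neg_apply, LinearMap.coe_comp, Function.comp_apply,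
      LinearMap.coe_restrictScalars, LinearEquiv.coe_coe, LinearMap.sub_apply,
      Algebra.linearMap_apply, PadicInt.algebraMap_apply, starGamma_apply, Tlin_apply]
    rw [map_sub, γ.symm_apply_apply, map_sub]
    push_cast
    ring
  apply Submodule.linearMap_qext
  ext x
  simp only [LinearMap.coe_comp, Function.comp_apply, Submodule.mkQ_apply,
    LinearMap.zero_apply, LinearMap.zero_comp]
  rw [alphaMap_mk, hpsi]
  simp only [LinearMap.neg_apply, LinearMap.coe_comp, Function.comp_apply,
    LinearMap.coe_restrictScalars, LinearEquiv.coe_coe, Algebra.linearMap_apply,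
    PadicInt.algebraMap_apply, map_neg]
  rw [piP_coe_eq_zero, neg_zero]

include hc0 hc in
lemma alphaMap_ker (φ : M →ₗ[ℤ_[p]] ℤ_[p]) (h : alphaMap p G M γ c hc0 hc φ = 0) :
    φ ∈ LinearMap.range (starGamma p G M γ - LinearMap.id) := by
  have hnorm : ∀ x, ‖psiMap p G M γ c hc0 hc φ x‖ ≤ 1 := by
    intro x
    have h1 : alphaMap p G M γ c hc0 hc φ (Submodule.Quotient.mk x) = 0 := by rw [h]; rfl
    rw [alphaMap_mk] at h1
    rw [← mem_range_algebraMap_iff]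
    rwa [piP, Submodule.mkQ_apply, Submodule.Quotient.mk_eq_zero] at h1
  set ρ := toIntDual p M (psiMap p G M γ c hc0 hc φ) hnorm with hρ
  have hφρ : ∀ x, φ x = ρ (Tlin p G M γ x) := by
    intro x
    have : ((ρ (Tlin p G M γ x) : ℤ_[p]) : ℚ_[p]) = ((φ x : ℤ_[p]) : ℚ_[p]) := by
      rw [hρ, toIntDual_coe, psiMap_T]
    exact Subtype.coe_injective this.symm
  refine ⟨-(ρ.comp (LinearMap.restrictScalars ℤ_[p] γ.toLinearMap)), ?_⟩
  ext x
  simp only [LinearMap.sub_apply, LinearMap.id_apply, starGamma_apply, LinearMap.neg_apply,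
    LinearMap.coe_comp, Function.comp_apply, LinearMap.coe_restrictScalars,
    LinearEquiv.coe_coe]
  rw [γ.apply_symm_apply, hφρ x, Tlin_apply, map_sub]
  ring

include hc0 hc in
lemma alphaMap_surjective (f : coinvOf p G M γ →ₗ[ℤ_[p]] PruferModule p) :
    ∃ φ, alphaMap p G M γ c hc0 hc φ = f := by
  -- lift `f ∘ mk` to a ℚ_p-valued functional via the basis
  have hq : ∀ i : ιM, ∃ q : ℚ_[p],
      piP p q = f (Submodule.Quotient.mk ((Module.Free.chooseBasis ℤ_[p] M) i)) := by
    intro i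
    obtain ⟨q, hq⟩ := Submodule.Quotient.mk_surjective _
      (f (Submodule.Quotient.mk ((Module.Free.chooseBasis ℤ_[p] M) i)))
    exact ⟨q, hq⟩
  choose q hq using hq
  set F : M →ₗ[ℤ_[p]] ℚ_[p] := (Module.Free.chooseBasis ℤ_[p] M).constr ℤ_[p] q with hF
  have hFmk : ∀ x : M, piP p (F x) = f (Submodule.Quotient.mk x) := by
    have : (piP p).comp F = f.comp
        ((LinearMap.range (γ.toLinearMap - LinearMap.id)).restrictScalars ℤ_[p]).mkQ := by
      apply (Module.Free.chooseBasis ℤ_[p] M).ext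
      intro i
      simp only [LinearMap.coe_comp, Function.comp_apply, Submodule.mkQ_apply, hF,
        Module.Basis.constr_basis]
      exact hq i
    intro x
    exact congrFun (congrArg (fun g => g.toFun) this) x
  have hFT : ∀ x, ‖F (Tlin p G M γ x)‖ ≤ 1 := by
    intro x
    rw [← mem_range_algebraMap_iff]
    have h0 : (Submodule.Quotient.mk (Tlin p G M γ x) : coinvOf p G M γ) = 0 := by
      rw [Submodule.Quotient.mk_eq_zero]
      exact (mem_coinv_iff p G M γ _).mpr ⟨x, rfl⟩
    have := hFmk (Tlin p G M γ x)
    rw [h0, map_zero, piP, Submodule.mkQ_apply, Submodule.Quotient.mk_eq_zero] at this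
    exact this
  refine ⟨toIntDual p M (F.comp (Tlin p G M γ)) (fun x => hFT x), ?_⟩
  have hψ : psiMap p G M γ c hc0 hc (toIntDual p M (F.comp (Tlin p G M γ)) (fun x => hFT x))
      = F := by
    apply psi_unique p G M γ c hc0 hc
    intro x
    rw [psiMap_T, toIntDual_coe]
    rfl
  apply Submodule.linearMap_qext
  ext x
  simp only [LinearMap.coe_comp, Function.comp_apply, Submodule.mkQ_apply]
  rw [alphaMap_mk, hψ, hFmk]

lemma gAct_Tlin (g : G) (x : M) :
    gAct p G M g (Tlin p G M γ x) = Tlin p G M γ (gAct p G M g x) := by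
  simp only [gAct, Tlin_apply, LinearMap.coe_restrictScalars, LinearMap.lsmul_apply, smul_sub]
  rw [← map_smul]

lemma starG_apply (g : G) (φ : M →ₗ[ℤ_[p]] ℤ_[p]) (x : M) :
    starG p G M g φ x = φ (gAct p G M g⁻¹ x) := rfl

include hc0 hc in
lemma alphaMap_equivariant (g : G) (φ : M →ₗ[ℤ_[p]] ℤ_[p]) :
    alphaMap p G M γ c hc0 hc (starG p G M g φ) =
      (alphaMap p G M γ c hc0 hc φ).comp (gActQ p G M γ g⁻¹) := by
  have hψ : psiMap p G M γ c hc0 hc (starG p G M g φ) =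
      (psiMap p G M γ c hc0 hc φ).comp (gAct p G M g⁻¹) := by
    apply psi_unique p G M γ c hc0 hc
    intro x
    rw [psiMap_T, starG_apply, LinearMap.comp_apply, gAct_Tlin, psiMap_T]
  apply Submodule.linearMap_qext
  ext x
  simp only [LinearMap.coe_comp, Function.comp_apply, Submodule.mkQ_apply]
  rw [alphaMap_mk, hψ, gActQ, Submodule.mapQ_apply, alphaMap_mk]
  rfl

end aux

/-- Let `G` be a finite abelian group and `M` a `ℤ_p[G]`-module, free
of finite rank over `ℤ_p`, with a `ℤ_p[G]`-linear automorphism `γ` whose module of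
coinvariants `M_Γ = M/(γ-1)M` is finite.  Then there is an isomorphism of
`ℤ_p[G]`-modules `Hom_{ℤ_p}(M_Γ, ℚ_p/ℤ_p) ≅ (M*)_Γ`, where `M* = Hom_{ℤ_p}(M, ℤ_p)`
carries the contravariant `G`- and `γ`-actions and the Pontrjagin dual of `M_Γ`
carries the contravariant `G`-action `(g • f)(x) = f(g⁻¹ • x)`: i.e. a
`ℤ_p`-linear isomorphism commuting with the `G`-actions. -/
theorem pontrjagin_dual_coinvariants_iso_coinvariants_of_dual
    (p : ℕ) [Fact p.Prime] (G : Type) [CommGroup G] [Finite G]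
    (M : Type) [AddCommGroup M] [Module ℤ_[p] M]
    [Module (MonoidAlgebra ℤ_[p] G) M] [IsScalarTower ℤ_[p] (MonoidAlgebra ℤ_[p] G) M]
    [Module.Free ℤ_[p] M] [Module.Finite ℤ_[p] M]
    (γ : M ≃ₗ[MonoidAlgebra ℤ_[p] G] M)
    (hfin : Finite (coinvOf p G M γ)) :
    ∃ e : (coinvOf p G M γ →ₗ[ℤ_[p]] PruferModule p) ≃ₗ[ℤ_[p]] dualCoinv p G M γ,
      ∀ (g : G) (f : coinvOf p G M γ →ₗ[ℤ_[p]] PruferModule p),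
        e (f.comp (gActQ p G M γ g⁻¹)) = starGQ p G M γ g (e f) := by
  obtain ⟨c, hc0, hc⟩ := exists_c p G M γ hfin
  set β : dualCoinv p G M γ →ₗ[ℤ_[p]] (coinvOf p G M γ →ₗ[ℤ_[p]] PruferModule p) :=
    Submodule.liftQ _ (alphaMap p G M γ c hc0 hc)
      (by
        rintro φ ⟨v, rfl⟩
        rw [LinearMap.mem_ker, LinearMap.sub_apply, LinearMap.id_apply]
        exact alphaMap_vanish p G M γ c hc0 hc v) with hβ
  have hβmk : ∀ φ, β (Submodule.Quotient.mk φ) = alphaMap p G M γ c hc0 hc φ := by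
    intro φ
    rw [hβ, Submodule.liftQ_apply]
  have hbij : Function.Bijective β := by
    constructor
    · rw [injective_iff_map_eq_zero]
      intro u hu
      obtain ⟨φ, rfl⟩ := Submodule.Quotient.mk_surjective _ u
      rw [hβmk] at hu
      rw [Submodule.Quotient.mk_eq_zero]
      exact alphaMap_ker p G M γ c hc0 hc φ hu
    · intro f
      obtain ⟨φ, hφ⟩ := alphaMap_surjective p G M γ c hc0 hc f
      exact ⟨Submodule.Quotient.mk φ, by rw [hβmk, hφ]⟩
  set E := LinearEquiv.ofBijective β hbij with hE
  have hEapp : ∀ u, E u = β u := fun u => rfl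
  have key : ∀ (g : G) (u : dualCoinv p G M γ),
      β (starGQ p G M γ g u) = (β u).comp (gActQ p G M γ g⁻¹) := by
    intro g u
    obtain ⟨φ, rfl⟩ := Submodule.Quotient.mk_surjective _ u
    rw [starGQ, Submodule.mapQ_apply, hβmk, hβmk]
    exact alphaMap_equivariant p G M γ c hc0 hc g φ
  refine ⟨E.symm, ?_⟩
  intro g f
  rw [LinearEquiv.symm_apply_eq]
  rw [hEapp, key g (E.symm f), ← hEapp, E.apply_symm_apply]
end

section
/- Let p be a prime, G a finite abelian group, R := ℤ_p[G], and Λ_R := R[[X]] the power series ring over R. Let M be a Λ_R-module which is free of finite rank as a ℤ_p-module and such that M/XM is finite. If M has projective dimension at most 1 as a Λ_R-module, then M/XM has projective dimension at most 1 as an R-module. -/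
set_option linter.unusedSectionVars false

section Aux


open PowerSeries

variable {A R : Type} [CommRing A] [IsDomain A] [CharZero A] {M : Type} [CommRing R] [Algebra A R]
  [AddCommGroup M]
  [Module (PowerSeries R) M] [Module R M] [IsScalarTower R (PowerSeries R) M]
  [Module A M] [IsScalarTower A R M] [Module.Free A M] [Module.Finite A M]

theorem hRsmul (r : R) (m : M) : r • m = (PowerSeries.C (R := R) r) • m := by
  conv_lhs => rw [← one_smul (PowerSeries R) m, ← smul_assoc]
  rw [Algebra.smul_def, mul_one, PowerSeries.C_eq_algebraMap]

theorem hcomm (z : A) (c : PowerSeries R) (m : M) : c • z • m = z • c • m := by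
  have h2 : ∀ m' : M, (z • (1:R)) • m' = z • m' := fun m' => by rw [smul_assoc, one_smul]
  rw [← h2 m, ← h2 (c • m), hRsmul (z • (1:R)) m, hRsmul (z • (1:R)) (c • m),
    ← mul_smul, ← mul_smul, mul_comm]

include A in
theorem hXinj
    (hfin : Finite
      (M ⧸ (LinearMap.range
        ((PowerSeries.X : PowerSeries R) •
          (LinearMap.id : M →ₗ[PowerSeries R] M))).restrictScalars R))
    (m : M) (hm : (PowerSeries.X : PowerSeries R) • m = 0) : m = 0 := by
  classical
  set S := (LinearMap.range ((PowerSeries.X : PowerSeries R) •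
      (LinearMap.id : M →ₗ[PowerSeries R] M))).restrictScalars R with hSdef
  set T : M →ₗ[A] M :=
    { toFun := fun m => (PowerSeries.X : PowerSeries R) • m
      map_add' := fun a b => smul_add _ a b
      map_smul' := fun z a => hcomm z _ a } with hTdef
  -- surjection (M ⧸ S) → (M ⧸ range T)
  have hfin2 : Finite (M ⧸ LinearMap.range T) := by
    have hrel : (Relator.LiftFun (Submodule.quotientRel S).r (Submodule.quotientRel (LinearMap.range T)).r)
        id id := by
      intro a b hab
      have h1 : a - b ∈ S := (Submodule.quotientRel_def S).mp hab
      obtain ⟨m', hm'⟩ := h1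
      exact (Submodule.quotientRel_def _).mpr ⟨m', hm'⟩
    have hsur : Function.Surjective
        (Quotient.map' (s₁ := Submodule.quotientRel S)
          (s₂ := Submodule.quotientRel (LinearMap.range T)) id hrel) := by
      intro y
      obtain ⟨m', rfl⟩ := Submodule.Quotient.mk_surjective _ y
      exact ⟨Submodule.Quotient.mk m', rfl⟩
    exact Finite.of_surjective _ hsur
  -- kill the quotient by the cardinality
  set n : ℕ := Nat.card (M ⧸ LinearMap.range T) with hn
  have hnpos : n ≠ 0 := Nat.card_ne_zero.mpr ⟨⟨0⟩, hfin2⟩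
  have hkill : ∀ x : M ⧸ LinearMap.range T, (n : A) • x = 0 := by
    intro x
    rw [Nat.cast_smul_eq_nsmul]
    exact card_nsmul_eq_zero'
  -- rank of the quotient is zero
  have hrk0 : Module.rank A (M ⧸ LinearMap.range T) = 0 := by
    rw [rank_eq_zero_iff]
    intro x
    exact ⟨(n : A), Nat.cast_ne_zero.mpr hnpos, hkill x⟩
  have hadd := Submodule.rank_quotient_add_rank (R := A) (LinearMap.range T)
  rw [hrk0, zero_add] at hadd
  have hadd2 := LinearMap.rank_range_add_rank_ker T
  rw [hadd] at hadd2
  have hlt : Module.rank A M < Cardinal.aleph0 := Module.rank_lt_aleph0 A M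
  have hker0 : Module.rank A (LinearMap.ker T) = 0 := by
    have : Module.rank A M + Module.rank A (LinearMap.ker T) = Module.rank A M + 0 := by
      rw [add_zero]; exact hadd2
    exact Cardinal.eq_of_add_eq_add_left this hlt
  rw [rank_eq_zero_iff] at hker0
  have hmK : m ∈ LinearMap.ker T := LinearMap.mem_ker.mpr hm
  obtain ⟨a, ha, hax⟩ := hker0 ⟨m, hmK⟩
  have h2 : a • m = 0 := congrArg Subtype.val hax
  exact ((smul_eq_zero (r := a) (m := m)).mp h2).resolve_left ha

end Aux

/-- A module has projective dimension at most 1 iff some (equivalently, any)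
surjection onto it from a free module has projective kernel. -/
def PdLeOne (R : Type) [Ring R] (M : Type) [AddCommGroup M] [Module R M] : Prop :=
  ∃ (ι : Type) (f : (ι →₀ R) →ₗ[R] M),
    Function.Surjective f ∧ Module.Projective R (LinearMap.ker f)


section Aux
variable {A R : Type} [CommRing A] [IsDomain A] [CharZero A] {M : Type} [CommRing R] [Algebra A R]
  [AddCommGroup M]
  [Module (PowerSeries R) M] [Module R M] [IsScalarTower R (PowerSeries R) M]
  [Module A M] [IsScalarTower A R M] [Module.Free A M] [Module.Finite A M]

include A in
set_option maxHeartbeats 2000000 in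
theorem aux
    (hfin : Finite
      (M ⧸ (LinearMap.range
        ((PowerSeries.X : PowerSeries R) •
          (LinearMap.id : M →ₗ[PowerSeries R] M))).restrictScalars R))
    (h1 : PdLeOne (PowerSeries R) M) :
    PdLeOne R
      (M ⧸ (LinearMap.range
        ((PowerSeries.X : PowerSeries R) •
          (LinearMap.id : M →ₗ[PowerSeries R] M))).restrictScalars R) := by
  classical
  obtain ⟨ι, f, hf, hK⟩ := h1
  set S := (LinearMap.range ((PowerSeries.X : PowerSeries R) •
      (LinearMap.id : M →ₗ[PowerSeries R] M))).restrictScalars R with hSdef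
  have hXi : ∀ m : M, (PowerSeries.X : PowerSeries R) • m = 0 → m = 0 :=
    fun m hm => hXinj (A := A) hfin m hm
  let πr : PowerSeries R →+* R := PowerSeries.constantCoeff (R := R)
  let πl : PowerSeries R →ₗ[R] R :=
    { toFun := πr
      map_add' := map_add πr
      map_smul' := fun r s => by
        simp [πr, ← PowerSeries.coeff_zero_eq_constantCoeff, PowerSeries.coeff_smul,
          smul_eq_mul] }
  let cl : R →ₗ[R] PowerSeries R := Algebra.linearMap R (PowerSeries R)
  let cF : (ι →₀ R) →ₗ[R] (ι →₀ PowerSeries R) := Finsupp.mapRange.linearMap cl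
  let pF : (ι →₀ PowerSeries R) →ₗ[R] (ι →₀ R) := Finsupp.mapRange.linearMap πl
  let sh : PowerSeries R → PowerSeries R :=
    fun s => PowerSeries.mk fun k => PowerSeries.coeff (R := R) (k + 1) s
  have sh0 : sh 0 = 0 := by ext k; simp [sh]
  let sF : (ι →₀ PowerSeries R) → (ι →₀ PowerSeries R) := fun a => Finsupp.mapRange sh sh0 a
  have hdec : ∀ a : ι →₀ PowerSeries R, cF (pF a) + (PowerSeries.X : PowerSeries R) • sF a = a := by
    intro a
    ext i : 1
    simp only [cF, pF, sF, cl, πl, πr, sh, Finsupp.add_apply, Finsupp.smul_apply,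
      Finsupp.mapRange.linearMap_apply, Finsupp.mapRange_apply, LinearMap.coe_mk,
      AddHom.coe_mk, Algebra.linearMap_apply, ← PowerSeries.C_eq_algebraMap, smul_eq_mul]
    rw [add_comm]
    exact (PowerSeries.eq_X_mul_shift_add_const (a i)).symm
  have hpc : ∀ x : ι →₀ R, pF (cF x) = x := by
    intro x
    ext i
    simp [cF, pF, πl, πr, cl, ← PowerSeries.C_eq_algebraMap]
  have hpX : ∀ (c : PowerSeries R) (a : ι →₀ PowerSeries R), pF (c • a) = (πr c) • pF a := by
    intro c a
    ext i
    simp [pF, πl, πr, smul_eq_mul, map_mul]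
  let g : (ι →₀ R) →ₗ[R] (M ⧸ S) := S.mkQ ∘ₗ (f.restrictScalars R) ∘ₗ cF
  have hmemS : ∀ m : M, (PowerSeries.X : PowerSeries R) • m ∈ S := fun m => ⟨m, rfl⟩
  have hq0 : ∀ m : M, S.mkQ ((PowerSeries.X : PowerSeries R) • m) = 0 := fun m =>
    (Submodule.Quotient.mk_eq_zero S).mpr (hmemS m)
  have hgsurj : Function.Surjective g := by
    intro y
    obtain ⟨m, rfl⟩ := Submodule.Quotient.mk_surjective S y
    obtain ⟨a, ha⟩ := hf m
    refine ⟨pF a, ?_⟩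
    have h1 : cF (pF a) = a - (PowerSeries.X : PowerSeries R) • sF a := by
      rw [eq_sub_iff_add_eq]; exact hdec a
    show S.mkQ (f (cF (pF a))) = Submodule.Quotient.mk m
    rw [h1, map_sub, f.map_smul, ha, map_sub, hq0, sub_zero, Submodule.mkQ_apply]
  have hφmem : ∀ k ∈ LinearMap.ker f, pF k ∈ LinearMap.ker g := by
    intro k hk
    have h1 : cF (pF k) = k - (PowerSeries.X : PowerSeries R) • sF k := by
      rw [eq_sub_iff_add_eq]; exact hdec k
    show S.mkQ (f (cF (pF k))) = 0
    rw [h1, map_sub, f.map_smul, LinearMap.mem_ker.mp hk, zero_sub, map_neg, hq0, neg_zero]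
  have hψex : ∀ y ∈ LinearMap.ker g, ∃ k, k ∈ LinearMap.ker f ∧ pF k = y := by
    intro y hy
    have h1 : f (cF y) ∈ S := by
      have h2 := LinearMap.mem_ker.mp hy
      exact (Submodule.Quotient.mk_eq_zero S).mp h2
    obtain ⟨m', hm'⟩ := h1
    obtain ⟨b, hb⟩ := hf m'
    refine ⟨cF y - (PowerSeries.X : PowerSeries R) • b, ?_, ?_⟩
    · rw [LinearMap.mem_ker, map_sub, f.map_smul, hb]
      have : (PowerSeries.X : PowerSeries R) • m' = f (cF y) := hm'
      rw [this, sub_self]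
    · rw [map_sub, hpc, hpX]
      simp [πr]
  refine ⟨ι, g, hgsurj, ?_⟩
  refine Module.Projective.of_lifting_property.{0,0} (R := R) (P := ↥(LinearMap.ker g))
    (fun {A' B' : Type} [AddCommGroup A'] [AddCommGroup B'] [Module R A'] [Module R B']
      (e : A' →ₗ[R] B') (u : ↥(LinearMap.ker g) →ₗ[R] B') (he : Function.Surjective e) => ?_)
  letI : Module (PowerSeries R) A' := Module.compHom A' πr
  letI : Module (PowerSeries R) B' := Module.compHom B' πr
  letI : Module (PowerSeries R) (LinearMap.ker g) := Module.compHom _ πr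
  let eΛ : A' →ₗ[PowerSeries R] B' :=
    { toFun := e
      map_add' := e.map_add
      map_smul' := fun c x => e.map_smul (πr c) x }
  let uΛ : (LinearMap.ker g) →ₗ[PowerSeries R] B' :=
    { toFun := u
      map_add' := u.map_add
      map_smul' := fun c x => u.map_smul (πr c) x }
  let ψ : (LinearMap.ker f) →ₗ[PowerSeries R] (LinearMap.ker g) :=
    { toFun := fun k => ⟨pF k.1, hφmem k.1 k.2⟩
      map_add' := fun k l => Subtype.ext (by exact map_add pF k.1 l.1)
      map_smul' := fun c k => Subtype.ext (by exact hpX c k.1) }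
  have hψ : Function.Surjective ψ := by
    rintro ⟨y, hy⟩
    obtain ⟨k, hk, hpk⟩ := hψex y hy
    exact ⟨⟨k, hk⟩, Subtype.ext hpk⟩
  obtain ⟨hΛ, hh⟩ := Module.projective_lifting_property eΛ (uΛ ∘ₗ ψ) he
  have hker0 : ∀ k : LinearMap.ker f, ψ k = 0 → hΛ k = 0 := by
    rintro ⟨k, hk⟩ hkψ
    have h0 : pF k = 0 := congrArg Subtype.val hkψ
    have h1 : (PowerSeries.X : PowerSeries R) • sF k = k := by
      have h2 := hdec k
      rw [h0, map_zero, zero_add] at h2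
      exact h2
    have h2 : f (sF k) = 0 := by
      apply hXi
      rw [← f.map_smul, h1, LinearMap.mem_ker.mp hk]
    have h3 : (⟨k, hk⟩ : LinearMap.ker f) =
        (PowerSeries.X : PowerSeries R) • ⟨sF k, LinearMap.mem_ker.mpr h2⟩ :=
      Subtype.ext (by exact h1.symm)
    rw [h3, map_smul]
    show (πr (PowerSeries.X : PowerSeries R)) • hΛ _ = 0
    rw [PowerSeries.constantCoeff_X, zero_smul]
  have key : ∀ k k' : LinearMap.ker f, ψ k = ψ k' → hΛ k = hΛ k' := by
    intro k k' hkk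
    have h1 : ψ (k - k') = 0 := by rw [map_sub ψ k k', hkk, sub_self]
    have h2 := hker0 _ h1
    rw [map_sub hΛ k k', sub_eq_zero] at h2
    exact h2
  choose sec hsec using hψ
  let ℓfun : (LinearMap.ker g) → A' := fun y => hΛ (sec y)
  have hℓadd : ∀ y y' : LinearMap.ker g, ℓfun (y + y') = ℓfun y + ℓfun y' := by
    intro y y'
    have h1 : ψ (sec (y + y')) = ψ (sec y + sec y') := by
      rw [map_add, hsec, hsec, hsec]
    have := key _ _ h1
    rw [map_add] at this
    exact this
  have hℓsmul : ∀ (r : R) (y : LinearMap.ker g), ℓfun (r • y) = r • ℓfun y := by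
    intro r y
    have hry : (PowerSeries.C (R := R) r : PowerSeries R) • y = r • y := by
      show (πr (PowerSeries.C (R := R) r)) • y = r • y
      rw [PowerSeries.constantCoeff_C]
    have h1 : ψ (sec (r • y)) = ψ ((PowerSeries.C (R := R) r : PowerSeries R) • sec y) := by
      rw [map_smul, hsec, hsec, hry]
    have h2 := key _ _ h1
    rw [map_smul] at h2
    have h3 : (PowerSeries.C (R := R) r : PowerSeries R) • hΛ (sec y) = r • hΛ (sec y) := by
      show (πr (PowerSeries.C (R := R) r)) • hΛ (sec y) = r • hΛ (sec y)
      rw [PowerSeries.constantCoeff_C]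
    rw [h3] at h2
    exact h2
  let hR : (LinearMap.ker g) →ₗ[R] A' :=
    { toFun := ℓfun
      map_add' := hℓadd
      map_smul' := hℓsmul }
  refine ⟨hR, ?_⟩
  ext y
  show e (ℓfun y) = u y
  have h1 : eΛ (hΛ (sec y)) = uΛ (ψ (sec y)) := LinearMap.ext_iff.mp hh (sec y)
  rw [hsec] at h1
  exact h1

end Aux

/-- Let `G` be a finite abelian group, `R = ℤ_p[G]`, `Λ_R = R[[X]]`,
and `M` a `Λ_R`-module which is free of finite rank over `ℤ_p` and whose module of
`Γ`-coinvariants `M/XM` is finite.  If `M` has projective dimension at most 1 over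
`Λ_R`, then `M/XM` has projective dimension at most 1 over `R`. -/
theorem pdLeOne_coinvariants_of_pdLeOne
    (p : ℕ) [Fact p.Prime] (G : Type) [CommGroup G] [Finite G]
    (M : Type) [AddCommGroup M]
    [Module (PowerSeries (MonoidAlgebra ℤ_[p] G)) M]
    [Module (MonoidAlgebra ℤ_[p] G) M]
    [IsScalarTower (MonoidAlgebra ℤ_[p] G) (PowerSeries (MonoidAlgebra ℤ_[p] G)) M]
    [Module ℤ_[p] M] [IsScalarTower ℤ_[p] (MonoidAlgebra ℤ_[p] G) M]
    [Module.Free ℤ_[p] M] [Module.Finite ℤ_[p] M]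
    (hfin : Finite
      (M ⧸ (LinearMap.range
        ((PowerSeries.X : PowerSeries (MonoidAlgebra ℤ_[p] G)) •
          (LinearMap.id : M →ₗ[PowerSeries (MonoidAlgebra ℤ_[p] G)] M))).restrictScalars
        (MonoidAlgebra ℤ_[p] G)))
    (h1 : PdLeOne (PowerSeries (MonoidAlgebra ℤ_[p] G)) M) :
    PdLeOne (MonoidAlgebra ℤ_[p] G)
      (M ⧸ (LinearMap.range
        ((PowerSeries.X : PowerSeries (MonoidAlgebra ℤ_[p] G)) •
          (LinearMap.id : M →ₗ[PowerSeries (MonoidAlgebra ℤ_[p] G)] M))).restrictScalars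
        (MonoidAlgebra ℤ_[p] G)) := by
  exact aux (A := ℤ_[p]) hfin h1
end

section
/- Let p be a prime, G a finite abelian group, and O the ring of integers in a finite extension of ℚ_p containing the values of all ℂ_p-valued irreducible characters of G. Then: (a) an element f ∈ O[G] is a non-zero-divisor if and only if χ(f) ≠ 0 for every character χ of G, where χ denotes the induced O-algebra homomorphism O[G] → O; and (b) an element f ∈ O[G][[t]] is a non-zero-divisor if and only if χ(f) ≠ 0 in O[[t]] for every character χ of G, where χ denotes the induced O[[t]]-algebra homomorphism O[G][[t]] → O[[t]]. -/
open MonoidAlgebra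

section Aux

variable {R : Type*} [CommRing R] [IsDomain R] {G : Type*} [CommGroup G] [Finite G]

/-- evaluation at `g` as a monoid hom on `G →* R`. -/
private def myev (R : Type*) [CommRing R] {G : Type*} [CommGroup G] (g : G) :
    (G →* R) →* R where
  toFun ψ := ψ g
  map_one' := rfl
  map_mul' _ _ := rfl

variable [HasEnoughRootsOfUnity R (Monoid.exponent G)]

private lemma myev_injective : Function.Injective (myev R (G := G)) := by
  intro g h hgh
  by_contra hne
  have h1 : g * h⁻¹ ≠ 1 := by simpa [mul_inv_eq_one] using hne
  obtain ⟨φ, hφ⟩ := CommGroup.exists_apply_ne_one_of_hasEnoughRootsOfUnity G R h1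
  apply hφ
  have h2 : ((Units.coeHom R).comp φ) g = ((Units.coeHom R).comp φ) h :=
    congrArg (fun F : (G →* R) →* R => F ((Units.coeHom R).comp φ)) hgh
  have h3 : φ g = φ h := Units.ext (by simpa using h2)
  rw [map_mul, map_inv, h3, mul_inv_cancel]

private lemma eq_zero_of_forall_lift (f : MonoidAlgebra R G)
    (h : ∀ ψ : G →* R, MonoidAlgebra.lift R R G ψ f = 0) : f = 0 := by
  classical
  have li : LinearIndependent R fun g : G => ((myev R g : (G →* R) →* R) : (G →* R) → R) :=
    (linearIndependent_monoidHom (G →* R) R).comp _ myev_injective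
  refine MonoidAlgebra.coeff_eq_zero.mp (linearIndependent_iff.mp li f.coeff ?_)
  funext ψ
  have := h ψ
  rw [MonoidAlgebra.lift_apply] at this
  rw [Finsupp.linearCombination_apply]
  show (f.coeff.sum fun g c => c • fun ψ' : G →* R => ψ' g) ψ = 0
  rw [Finsupp.sum, Finset.sum_apply]
  rw [Finsupp.sum] at this
  simpa [smul_eq_mul] using this


variable [Fintype G]

private lemma sum_hom_eq_zero {ψ : G →* R} {g₀ : G} (h : ψ g₀ ≠ 1) :
    ∑ g : G, ψ g = 0 := by
  have key : ψ g₀ * ∑ g : G, ψ g = ∑ g : G, ψ g := by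
    rw [Finset.mul_sum]
    simp_rw [← map_mul]
    exact Fintype.sum_bijective (g₀ * ·) (Group.mulLeft_bijective g₀) _ _ (fun g => rfl)
  have h2 : (ψ g₀ - 1) * ∑ g : G, ψ g = 0 := by rw [sub_mul, one_mul, key, sub_self]
  rcases mul_eq_zero.mp h2 with h3 | h3
  · exact absurd (sub_eq_zero.mp h3) h
  · exact h3

private lemma mul_annihilator (f : MonoidAlgebra R G) (ψ₀ : G →* R)
    (hf : MonoidAlgebra.lift R R G ψ₀ f = 0) :
    f * (∑ g : G, MonoidAlgebra.single g (ψ₀ g⁻¹)) = 0 := by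
  classical
  apply eq_zero_of_forall_lift
  intro ψ
  rw [map_mul]
  rcases eq_or_ne ψ ψ₀ with rfl | hne
  · rw [hf, zero_mul]
  · have hz : (MonoidAlgebra.lift R R G ψ) (∑ g : G, MonoidAlgebra.single g (ψ₀ g⁻¹)) = 0 := by
      rw [map_sum]
      have hq : ∀ g : G, (MonoidAlgebra.lift R R G ψ) (MonoidAlgebra.single g (ψ₀ g⁻¹))
          = ψ g * ψ₀ g⁻¹ := fun g => by
        rw [MonoidAlgebra.lift_single, smul_eq_mul, mul_comm]
      simp_rw [hq]
      obtain ⟨g₀, hg₀⟩ := DFunLike.ne_iff.mp hne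
      set φ : G →* R :=
        { toFun := fun g => ψ g * ψ₀ g⁻¹
          map_one' := by simp
          map_mul' := fun a b => by
            show ψ (a * b) * ψ₀ (a * b)⁻¹ = ψ a * ψ₀ a⁻¹ * (ψ b * ψ₀ b⁻¹)
            rw [mul_inv, map_mul, map_mul]; ring }
      have hφ : φ g₀ ≠ 1 := by
        intro hc
        apply hg₀
        have h1 : ψ₀ g₀ * ψ₀ g₀⁻¹ = 1 := by rw [← map_mul, mul_inv_cancel, map_one]
        have h2 : ψ₀ g₀⁻¹ ≠ 0 := fun h0 => by simp [h0] at h1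
        have h3 : ψ g₀ * ψ₀ g₀⁻¹ = ψ₀ g₀ * ψ₀ g₀⁻¹ := by rw [h1]; exact hc
        exact mul_right_cancel₀ h2 h3
      exact sum_hom_eq_zero hφ
    rw [hz, mul_zero]

private lemma annihilator_ne_zero (ψ₀ : G →* R) :
    (∑ g : G, MonoidAlgebra.single g (ψ₀ g⁻¹) : MonoidAlgebra R G) ≠ 0 := by
  classical
  have h1 : (∑ g : G, MonoidAlgebra.single g (ψ₀ g⁻¹) : MonoidAlgebra R G).coeff 1 = 1 := by
    rw [MonoidAlgebra.coeff_sum, Finsupp.finset_sum_apply]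
    rw [Finset.sum_eq_single 1]
    · simp
    · intro b _ hb
      rw [MonoidAlgebra.coeff_single, Finsupp.single_apply, if_neg hb]
    · intro h
      exact absurd (Finset.mem_univ 1) h
  intro h
  rw [h] at h1
  exact one_ne_zero h1.symm

end Aux


/-- Let `G` be a finite abelian group and `O` the ring of integers of a
finite extension `K` of `ℚ_p` containing the values of all `ℂ_p`-valued irreducible
characters of `G` (equivalently, a primitive root of unity of order the exponent of
`G`).  Then (a) `f ∈ O[G]` is a non-zero-divisor iff `χ(f) ≠ 0` for every character
`χ` (i.e. every `O`-algebra homomorphism `O[G] → O`), and (b) `f ∈ O[G][[t]]` is a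
non-zero-divisor iff `χ(f) ≠ 0` in `O[[t]]` for every character `χ`. -/
theorem mem_nonZeroDivisors_iff_characters_ne_zero
    (p : ℕ) [Fact p.Prime] (G : Type) [CommGroup G] [Finite G]
    (K : Type) [Field K] [Algebra ℚ_[p] K] [FiniteDimensional ℚ_[p] K]
    [Algebra ℤ_[p] K] [IsScalarTower ℤ_[p] ℚ_[p] K]
    (hζ : ∃ ζ : integralClosure ℤ_[p] K, IsPrimitiveRoot ζ (Monoid.exponent G)) :
    (∀ f : MonoidAlgebra (integralClosure ℤ_[p] K) G,
      f ∈ nonZeroDivisors (MonoidAlgebra (integralClosure ℤ_[p] K) G) ↔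
      ∀ χ : MonoidAlgebra (integralClosure ℤ_[p] K) G →ₐ[integralClosure ℤ_[p] K]
            integralClosure ℤ_[p] K, χ f ≠ 0) ∧
    (∀ f : PowerSeries (MonoidAlgebra (integralClosure ℤ_[p] K) G),
      f ∈ nonZeroDivisors (PowerSeries (MonoidAlgebra (integralClosure ℤ_[p] K) G)) ↔
      ∀ χ : MonoidAlgebra (integralClosure ℤ_[p] K) G →ₐ[integralClosure ℤ_[p] K]
            integralClosure ℤ_[p] K,
        PowerSeries.map χ.toRingHom f ≠ 0) := by
  classical
  letI : Fintype G := Fintype.ofFinite G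
  set O := integralClosure ℤ_[p] K with hO
  haveI : IsDomain O := inferInstance
  haveI : NeZero (Monoid.exponent G) := ⟨Monoid.exponent_ne_zero_of_finite⟩
  haveI : HasEnoughRootsOfUnity O (Monoid.exponent G) := ⟨hζ, rootsOfUnity.isCyclic _ _⟩
  constructor
  · intro f
    constructor
    · intro hf χ hχ
      set ψ₀ := (MonoidAlgebra.lift O O G).symm χ with hψ₀
      have hlift : MonoidAlgebra.lift O O G ψ₀ = χ :=
        (MonoidAlgebra.lift O O G).apply_symm_apply χ
      have h0 : MonoidAlgebra.lift O O G ψ₀ f = 0 := by rw [hlift]; exact hχ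
      have hann := mul_annihilator f ψ₀ h0
      exact annihilator_ne_zero ψ₀
        (mem_nonZeroDivisors_iff_right.mp hf _ (by rw [mul_comm]; exact hann))
    · intro h
      rw [mem_nonZeroDivisors_iff_right]
      intro x hx
      apply eq_zero_of_forall_lift
      intro ψ
      have h1 : (MonoidAlgebra.lift O O G ψ) x * (MonoidAlgebra.lift O O G ψ) f = 0 := by
        rw [← map_mul, hx, map_zero]
      exact (mul_eq_zero.mp h1).resolve_right (h _)
  · intro f
    constructor
    · intro hf χ hχ
      set ψ₀ := (MonoidAlgebra.lift O O G).symm χ with hψ₀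
      have hlift : MonoidAlgebra.lift O O G ψ₀ = χ :=
        (MonoidAlgebra.lift O O G).apply_symm_apply χ
      set e := ∑ g : G, MonoidAlgebra.single g (ψ₀ g⁻¹) with he
      have hCe : (PowerSeries.C (R := MonoidAlgebra O G) e) * f = 0 := by
        refine PowerSeries.ext fun n => ?_
        have hc : χ (PowerSeries.coeff n f) = 0 := by
          have := congrArg (PowerSeries.coeff n) hχ
          simpa [PowerSeries.coeff_map] using this
        have h0 : MonoidAlgebra.lift O O G ψ₀ (PowerSeries.coeff n f) = 0 := by
          rw [hlift]; exact hc
        have hann := mul_annihilator (PowerSeries.coeff n f) ψ₀ h0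
        rw [PowerSeries.coeff_C_mul, map_zero, mul_comm]
        exact hann
      have hC0 := mem_nonZeroDivisors_iff_right.mp hf _ hCe
      have he0 : e = 0 := by
        have := congrArg (PowerSeries.coeff (R := MonoidAlgebra O G) 0) hC0
        simpa [PowerSeries.coeff_zero_C] using this
      exact annihilator_ne_zero ψ₀ he0
    · intro h
      rw [mem_nonZeroDivisors_iff_right]
      intro x hx
      refine PowerSeries.ext fun n => ?_
      rw [map_zero]
      apply eq_zero_of_forall_lift
      intro ψ
      have h1 : PowerSeries.map (MonoidAlgebra.lift O O G ψ).toRingHom x *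
          PowerSeries.map (MonoidAlgebra.lift O O G ψ).toRingHom f = 0 := by
        rw [← map_mul, hx, map_zero]
      have h2 : PowerSeries.map (MonoidAlgebra.lift O O G ψ).toRingHom x = 0 :=
        (mul_eq_zero.mp h1).resolve_right (h _)
      have := congrArg (PowerSeries.coeff n) h2
      simpa [PowerSeries.coeff_map] using this
end

section
/- Let p be a prime, G a finite abelian group, g ∈ G, and N an integer with |N| ≥ 2. Then the element 1 − N·g is a non-zero-divisor in the group ring ℤ_p[G]. -/
lemma algebraMap_mem_nonZeroDivisors_aux
    (p : ℕ) [Fact p.Prime] (G : Type) [CommGroup G] [Finite G]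
    (c : ℤ_[p]) (hc : c ≠ 0) :
    (algebraMap ℤ_[p] (MonoidAlgebra ℤ_[p] G)) c ∈
      nonZeroDivisors (MonoidAlgebra ℤ_[p] G) := by
  rw [mem_nonZeroDivisors_iff_right]
  intro f hf
  rw [mul_comm, ← Algebra.smul_def] at hf
  ext a
  have ha : c * f.coeff a = 0 := by
    have h2 : (c • f).coeff a = 0 := by rw [hf]; rfl
    rwa [show (c • f).coeff a = c * f.coeff a from rfl] at h2
  simpa using (mul_eq_zero.mp ha).resolve_left hc

/-- For a finite abelian group `G`, `g ∈ G` and an integer `N` with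
`|N| ≥ 2`, the element `1 - N·g` is a non-zero-divisor in `ℤ_p[G]`. -/
theorem one_sub_int_smul_group_elem_mem_nonZeroDivisors
    (p : ℕ) [Fact p.Prime] (G : Type) [CommGroup G] [Finite G]
    (g : G) (N : ℤ) (hN : 2 ≤ |N|) :
    (1 - MonoidAlgebra.single g (N : ℤ_[p]) : MonoidAlgebra ℤ_[p] G) ∈
      nonZeroDivisors (MonoidAlgebra ℤ_[p] G) := by
  set x : MonoidAlgebra ℤ_[p] G := MonoidAlgebra.single g (N : ℤ_[p]) with hx
  set m := orderOf g with hm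
  have hm1 : 1 ≤ m := orderOf_pos g
  have hNm : (N : ℤ)^m ≠ 1 := by
    intro h
    have : |N ^ m| = 1 := by rw [h]; simp
    rw [abs_pow] at this
    have h2 : (2:ℤ)^m ≤ |N|^m := pow_le_pow_left₀ (by norm_num) hN m
    have h3 : (2:ℤ) ≤ 2^m := by
      calc (2:ℤ) = 2^1 := (pow_one 2).symm
      _ ≤ 2^m := pow_le_pow_right₀ (by norm_num) hm1
    omega
  have hc : (1 : ℤ_[p]) - (N : ℤ_[p])^m ≠ 0 := by
    intro h
    apply hNm
    have h' : ((N : ℤ_[p]))^m = 1 := by linear_combination -h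
    exact_mod_cast h'
  have hxm : x ^ m = MonoidAlgebra.single (1 : G) ((N : ℤ_[p])^m) := by
    rw [hx, MonoidAlgebra.single_pow, pow_orderOf_eq_one]
  have key : (1 - x) * (∑ i ∈ Finset.range m, x ^ i)
      = (algebraMap ℤ_[p] (MonoidAlgebra ℤ_[p] G)) (1 - (N : ℤ_[p])^m) := by
    have h1 := geom_sum_mul x m
    have h2 : (algebraMap ℤ_[p] (MonoidAlgebra ℤ_[p] G)) (1 - (N : ℤ_[p])^m)
        = 1 - x ^ m := by
      rw [map_sub, map_one, hxm]
      congr 1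
    rw [h2]
    linear_combination -h1
  have hmem := algebraMap_mem_nonZeroDivisors_aux p G _ hc
  rw [← key] at hmem
  exact (mul_mem_nonZeroDivisors.mp hmem).1
end
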